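/- Let m ≥ 4 be an integer, let π be a permutation of {0,1,…,m−3}, and let e_i, f_i ∈ Z_2 for 0 ≤ i ≤ m−3. Let a = Ψ_{2^{m−2}−1}(g^0) and b = Ψ_{2^{m−2}−1}(g^1), sequences of length N = 2^{m−1}+2. Then for every integer τ with 2^{m−2}+2^{π(m−3)} < τ ≤ N−1, the aperiodic autocorrelation sum satisfies ρ_a(τ)+ρ_b(τ) ∈ {0, 4, −4}; in particular, whenever it is nonzero its magnitude is exactly 4. -/

import Mathlib

open Finset

/-- The `j`-th binary digit of the integer `i`, as an element of `ZMod 2`. -/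
def bitZ (i j : ℕ) : ZMod 2 := ((i / 2 ^ j) % 2 : ℕ)

/-- The generalized Boolean function `ζ^d` of the construction (in variables `x_0,…,x_{m-3}`). -/
def zeta (m : ℕ) (π : ℕ → ℕ) (d : ZMod 2) (x : ℕ → ZMod 2) : ZMod 2 :=
  (∑ α ∈ Finset.range (m - 3), x (π α) * x (π (α + 1))) + d * x (π (m - 3))

/-- The generalized Boolean function `η^d` of the construction. -/
def eta (m : ℕ) (π : ℕ → ℕ) (d : ZMod 2) (x : ℕ → ZMod 2) : ZMod 2 :=
  (∑ α ∈ Finset.range (m - 3), (1 - x (π α)) * (1 - x (π (α + 1))))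
    + (1 - d) * x (π (m - 3))

/-- The generalized Boolean function `g^d` of the construction (in `m` variables). -/
def gbf (m : ℕ) (π : ℕ → ℕ) (e f : ℕ → ZMod 2) (d : ZMod 2) (x : ℕ → ZMod 2) : ZMod 2 :=
  x (m - 2) * (1 - x (m - 1)) * zeta m π d x
    + (1 - x (m - 2)) * x (m - 1) * eta m π d x
    + d * (1 - x (m - 2)) * (1 - x (m - 1))
    + x (m - 2) * x (m - 1)
    + (∑ i ∈ Finset.range (m - 2), e i * x i)
    + (∑ i ∈ Finset.range (m - 2), f i * (1 - x i))

/-- The ±1 sequence `Ψ(F)` associated with a generalized Boolean function: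
its `i`-th entry is `(-1)^{F(r_{i,0}, r_{i,1}, …)}`. -/
def Psi (F : (ℕ → ZMod 2) → ZMod 2) (i : ℕ) : ℤ := (-1) ^ (F (bitZ i)).val

/-- The truncated sequence `Ψ_L(F)`, obtained by deleting the first (and last) `L`
entries of `Ψ(F)`: its `k`-th entry is the `(L+k)`-th entry of `Ψ(F)`. -/
def PsiT (F : (ℕ → ZMod 2) → ZMod 2) (L : ℕ) (k : ℕ) : ℤ := Psi F (L + k)

/-- Aperiodic autocorrelation of a length-`N` sequence `a` at time shift `τ`. -/
def rho (N : ℕ) (a : ℕ → ℤ) (τ : ℕ) : ℤ :=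
  ∑ k ∈ Finset.range (N - τ), a k * a (k + τ)

def nbit (x j : ℕ) : ℕ := x / 2 ^ j % 2

-- ZMod 2 sign helpers
lemma sgn_add (z w : ZMod 2) : ((-1:ℤ)) ^ ((z + w).val) = (-1) ^ z.val * (-1) ^ w.val := by
  revert z w; decide
lemma sgn_one_add (z : ZMod 2) : ((-1:ℤ)) ^ ((1 + z).val) = -((-1) ^ z.val) := by
  revert z; decide
lemma sgn_ne (z w : ZMod 2) (h : z ≠ w) : ((-1:ℤ)) ^ z.val * (-1) ^ w.val = -1 := by
  revert z w; decide
lemma sgn_eq (z w : ZMod 2) (h : z = w) : ((-1:ℤ)) ^ z.val * (-1) ^ w.val = 1 := by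
  subst h; revert z; decide
lemma zsum_ne (z w : ZMod 2) (h : z ≠ w) : z + w = 1 := by revert z w; decide
lemma bitZ_nbit (x j : ℕ) : bitZ x j = (nbit x j : ZMod 2) := rfl
lemma nbit_le_one' (x j : ℕ) : nbit x j ≤ 1 := Nat.lt_succ_iff.1 (Nat.mod_lt _ (by norm_num))
lemma bitZ_eq_iff (x i y j : ℕ) : bitZ x i = bitZ y j ↔ nbit x i = nbit y j := by
  rw [bitZ_nbit, bitZ_nbit]
  constructor
  · intro h
    have h1 := nbit_le_one' x i
    have h2 := nbit_le_one' y j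
    interval_cases h3 : nbit x i <;> interval_cases h4 : nbit y j <;> simp_all <;> exact absurd h (by decide)
  · intro h; rw [h]
lemma bitZ_compl_zmod (x j : ℕ) (hx : nbit x j ≤ 1) : True := trivial

def lin (m : ℕ) (e f : ℕ → ZMod 2) (x : ℕ → ZMod 2) : ZMod 2 :=
  (∑ i ∈ Finset.range (m - 2), e i * x i) + ∑ i ∈ Finset.range (m - 2), f i * (1 - x i)

def Aq (m : ℕ) (π : ℕ → ℕ) (e f : ℕ → ZMod 2) (d : ZMod 2) (u : ℕ) : ℤ :=
  (-1) ^ ((zeta m π d (bitZ u) + lin m e f (bitZ u)).val)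
def Bq (m : ℕ) (π : ℕ → ℕ) (e f : ℕ → ZMod 2) (d : ZMod 2) (u : ℕ) : ℤ :=
  (-1) ^ ((eta m π d (bitZ u) + lin m e f (bitZ u)).val)

-- quadrant forms of gbf
lemma gbf_Q1 (m : ℕ) (π : ℕ → ℕ) (e f : ℕ → ZMod 2) (d : ZMod 2) (x : ℕ → ZMod 2)
    (h2 : x (m - 2) = 1) (h1 : x (m - 1) = 0) :
    gbf m π e f d x = zeta m π d x + lin m e f x := by
  unfold gbf lin; rw [h2, h1]; ring

lemma gbf_Q2 (m : ℕ) (π : ℕ → ℕ) (e f : ℕ → ZMod 2) (d : ZMod 2) (x : ℕ → ZMod 2)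
    (h2 : x (m - 2) = 0) (h1 : x (m - 1) = 1) :
    gbf m π e f d x = eta m π d x + lin m e f x := by
  unfold gbf lin; rw [h2, h1]; ring

lemma gbf_Q0 (m : ℕ) (π : ℕ → ℕ) (e f : ℕ → ZMod 2) (d : ZMod 2) (x : ℕ → ZMod 2)
    (h2 : x (m - 2) = 0) (h1 : x (m - 1) = 0) :
    gbf m π e f d x = d + lin m e f x := by
  unfold gbf lin; rw [h2, h1]; ring

lemma gbf_Q3 (m : ℕ) (π : ℕ → ℕ) (e f : ℕ → ZMod 2) (d : ZMod 2) (x : ℕ → ZMod 2)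
    (h2 : x (m - 2) = 1) (h1 : x (m - 1) = 1) :
    gbf m π e f d x = 1 + lin m e f x := by
  unfold gbf lin; rw [h2, h1]; ring

-- congruence lemmas
lemma zeta_congr (m : ℕ) (hm : 4 ≤ m) (π : ℕ → ℕ)
    (hmaps : ∀ γ, γ < m - 2 → π γ < m - 2) (d : ZMod 2) (x y : ℕ → ZMod 2)
    (h : ∀ j, j < m - 2 → x j = y j) : zeta m π d x = zeta m π d y := by
  unfold zeta
  have hlast : x (π (m - 3)) = y (π (m - 3)) := h _ (hmaps _ (by omega))
  rw [hlast]
  congr 1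
  apply Finset.sum_congr rfl
  intro α hα
  rw [Finset.mem_range] at hα
  rw [h _ (hmaps _ (by omega)), h _ (hmaps _ (by omega))]

lemma eta_congr (m : ℕ) (hm : 4 ≤ m) (π : ℕ → ℕ)
    (hmaps : ∀ γ, γ < m - 2 → π γ < m - 2) (d : ZMod 2) (x y : ℕ → ZMod 2)
    (h : ∀ j, j < m - 2 → x j = y j) : eta m π d x = eta m π d y := by
  unfold eta
  have hlast : x (π (m - 3)) = y (π (m - 3)) := h _ (hmaps _ (by omega))
  rw [hlast]
  congr 1
  apply Finset.sum_congr rfl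
  intro α hα
  rw [Finset.mem_range] at hα
  rw [h _ (hmaps _ (by omega)), h _ (hmaps _ (by omega))]

lemma lin_congr (m : ℕ) (e f : ℕ → ZMod 2) (x y : ℕ → ZMod 2)
    (h : ∀ j, j < m - 2 → x j = y j) : lin m e f x = lin m e f y := by
  unfold lin
  congr 1 <;>
  · apply Finset.sum_congr rfl
    intro i hi
    rw [Finset.mem_range] at hi
    rw [h _ hi]

lemma nbit_lo (a u n j : ℕ) (hj : j < n) : nbit (a * 2 ^ n + u) j = nbit u j := by
  unfold nbit
  have hsplit : a * 2 ^ n = (a * 2 ^ (n - j - 1) * 2) * 2 ^ j := by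
    rw [mul_assoc, mul_assoc, ← pow_succ', ← pow_add]; congr 2; omega
  rw [hsplit, Nat.add_comm, Nat.add_mul_div_right _ _ (Nat.pow_pos (n := j) (by norm_num))]
  omega
lemma nbit_hi (a u n k : ℕ) (hu : u < 2 ^ n) : nbit (a * 2 ^ n + u) (n + k) = nbit a k := by
  unfold nbit
  rw [pow_add, ← Nat.div_div_eq_div_mul, Nat.add_comm,
    Nat.add_mul_div_right _ _ (Nat.pow_pos (n := n) (by norm_num)),
    Nat.div_eq_of_lt hu, Nat.zero_add]
lemma nbit_of_lt (x j : ℕ) (h : x < 2 ^ j) : nbit x j = 0 := by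
  unfold nbit; rw [Nat.div_eq_of_lt h]

lemma bitZ_lo (a u n j : ℕ) (hj : j < n) : bitZ (a * 2 ^ n + u) j = bitZ u j := by
  rw [bitZ_nbit, bitZ_nbit, nbit_lo _ _ _ _ hj]

section PsiEval
variable (m : ℕ) (π : ℕ → ℕ) (e f : ℕ → ZMod 2)

lemma psi_Q1 (hm : 4 ≤ m) (hmaps : ∀ γ, γ < m - 2 → π γ < m - 2) (d : ZMod 2)
    (u : ℕ) (hu : u < 2 ^ (m - 2)) :
    Psi (gbf m π e f d) (2 ^ (m - 2) + u) = Aq m π e f d u := by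
  unfold Psi Aq
  congr 1
  have hlow : ∀ j, j < m - 2 → bitZ (2 ^ (m - 2) + u) j = bitZ u j := by
    intro j hj
    have : 2 ^ (m - 2) + u = 1 * 2 ^ (m - 2) + u := by ring
    rw [this, bitZ_lo _ _ _ _ hj]
  have h2 : bitZ (2 ^ (m - 2) + u) (m - 2) = 1 := by
    rw [bitZ_nbit]
    have : 2 ^ (m - 2) + u = 1 * 2 ^ (m - 2) + u := by ring
    have h := nbit_hi 1 u (m - 2) 0 hu
    rw [Nat.add_zero] at h
    rw [this, h]
    norm_num [nbit]
  have h1 : bitZ (2 ^ (m - 2) + u) (m - 1) = 0 := by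
    rw [bitZ_nbit]
    have hlt : 2 ^ (m - 2) + u < 2 ^ (m - 1) := by
      have : 2 ^ (m - 1) = 2 ^ (m - 2) * 2 := by rw [← pow_succ]; congr 1; omega
      omega
    rw [nbit_of_lt _ _ hlt]
    norm_num
  rw [gbf_Q1 _ _ _ _ _ _ h2 h1,
    zeta_congr m hm π hmaps d _ _ hlow, lin_congr m e f _ _ hlow]

lemma psi_Q2 (hm : 4 ≤ m) (hmaps : ∀ γ, γ < m - 2 → π γ < m - 2) (d : ZMod 2)
    (u : ℕ) (hu : u < 2 ^ (m - 2)) :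
    Psi (gbf m π e f d) (2 * 2 ^ (m - 2) + u) = Bq m π e f d u := by
  unfold Psi Bq
  congr 1
  have hlow : ∀ j, j < m - 2 → bitZ (2 * 2 ^ (m - 2) + u) j = bitZ u j := by
    intro j hj
    exact bitZ_lo _ _ _ _ hj
  have h2 : bitZ (2 * 2 ^ (m - 2) + u) (m - 2) = 0 := by
    rw [bitZ_nbit]
    have h := nbit_hi 2 u (m - 2) 0 hu
    rw [Nat.add_zero] at h
    rw [h]
    norm_num [nbit]
  have h1 : bitZ (2 * 2 ^ (m - 2) + u) (m - 1) = 1 := by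
    rw [bitZ_nbit]
    have hm1 : m - 1 = (m - 2) + 1 := by omega
    have h := nbit_hi 2 u (m - 2) 1 hu
    rw [hm1, h]
    norm_num [nbit]
  rw [gbf_Q2 _ _ _ _ _ _ h2 h1,
    eta_congr m hm π hmaps d _ _ hlow, lin_congr m e f _ _ hlow]

lemma psi_Q0 (hm : 4 ≤ m) (d : ZMod 2) :
    Psi (gbf m π e f d) (2 ^ (m - 2) - 1) =
      (-1) ^ d.val * (-1) ^ ((lin m e f (bitZ (2 ^ (m - 2) - 1))).val) := by
  unfold Psi
  have hlt2 : (2 ^ (m - 2) - 1 : ℕ) < 2 ^ (m - 2) := by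
    have : (0:ℕ) < 2 ^ (m - 2) := Nat.pow_pos (n := _) (by norm_num)
    omega
  have h2 : bitZ (2 ^ (m - 2) - 1) (m - 2) = 0 := by
    rw [bitZ_nbit, nbit_of_lt _ _ hlt2]; norm_num
  have h1 : bitZ (2 ^ (m - 2) - 1) (m - 1) = 0 := by
    have : (2 ^ (m - 2) - 1 : ℕ) < 2 ^ (m - 1) := by
      calc (2 ^ (m - 2) - 1 : ℕ) < 2 ^ (m - 2) := hlt2
        _ ≤ 2 ^ (m - 1) := Nat.pow_le_pow_right (by norm_num) (by omega)
    rw [bitZ_nbit, nbit_of_lt _ _ this]; norm_num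
  rw [gbf_Q0 _ _ _ _ _ _ h2 h1, sgn_add]

lemma psi_Q3 (hm : 4 ≤ m) (d : ZMod 2) :
    Psi (gbf m π e f d) (3 * 2 ^ (m - 2)) =
      -((-1) ^ ((lin m e f (bitZ (3 * 2 ^ (m - 2)))).val)) := by
  unfold Psi
  have hu : (0:ℕ) < 2 ^ (m - 2) := Nat.pow_pos (n := _) (by norm_num)
  have h2 : bitZ (3 * 2 ^ (m - 2)) (m - 2) = 1 := by
    have h := nbit_hi 3 0 (m - 2) 0 hu
    simp only [Nat.add_zero] at h
    rw [bitZ_nbit, h]; decide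
  have h1 : bitZ (3 * 2 ^ (m - 2)) (m - 1) = 1 := by
    have h := nbit_hi 3 0 (m - 2) 1 hu
    simp only [Nat.add_zero] at h
    have hm1 : m - 1 = (m - 2) + 1 := by omega
    rw [bitZ_nbit, hm1, h]; decide
  rw [gbf_Q3 _ _ _ _ _ _ h2 h1, sgn_add]
  norm_num [ZMod.val_one]

end PsiEval

/-- flip the `c`-th bit of `x`. -/
def flipb (c x : ℕ) : ℕ := x / 2 ^ (c + 1) * 2 ^ (c + 1) + (1 - nbit x c) * 2 ^ c + x % 2 ^ c

lemma decomp (c x : ℕ) : x = x / 2 ^ (c + 1) * 2 ^ (c + 1) + nbit x c * 2 ^ c + x % 2 ^ c := by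
  have h1 := Nat.div_add_mod x (2 ^ c)
  have h2 := Nat.div_add_mod (x / 2 ^ c) 2
  have h3 : x / 2 ^ c / 2 = x / 2 ^ (c + 1) := by
    rw [Nat.div_div_eq_div_mul, ← pow_succ]
  have hp : (0:ℕ) < 2 ^ c := Nat.pow_pos (n := c) (by norm_num)
  unfold nbit
  have e2 : 2 ^ (c+1) = 2 ^ c * 2 := pow_succ 2 c
  rw [e2] at h3 ⊢
  nlinarith [h1, h2, h3]

/-- uniqueness-style extraction: if `y = a * 2^(c+1) + b * 2^c + r` with `b ≤ 1`, `r < 2^c`,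
then the pieces are the div/mod data of `y`. -/
lemma extract (c a b r : ℕ) (hb : b ≤ 1) (hr : r < 2 ^ c) :
    (a * 2 ^ (c + 1) + b * 2 ^ c + r) / 2 ^ (c + 1) = a ∧
    nbit (a * 2 ^ (c + 1) + b * 2 ^ c + r) c = b ∧
    (a * 2 ^ (c + 1) + b * 2 ^ c + r) % 2 ^ c = r := by
  have hp : (0:ℕ) < 2 ^ c := Nat.pow_pos (n := c) (by norm_num)
  have e2 : 2 ^ (c+1) = 2 ^ c * 2 := pow_succ 2 c
  have hlt : b * 2 ^ c + r < 2 ^ (c + 1) := by rw [e2]; nlinarith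
  have hd : (a * 2 ^ (c + 1) + (b * 2 ^ c + r)) / 2 ^ (c + 1) = a := by
    rw [Nat.add_comm, Nat.add_mul_div_right _ _ (Nat.pow_pos (n := (c+1)) (by norm_num)),
      Nat.div_eq_of_lt hlt, Nat.zero_add]
  refine ⟨by rw [← Nat.add_assoc] at hd; exact hd, ?_, ?_⟩
  · have hy : a * 2 ^ (c + 1) + b * 2 ^ c + r = (2 * a + b) * 2 ^ c + r := by
      rw [e2]; ring
    have h5 := nbit_hi (2 * a + b) r c 0 hr
    rw [Nat.add_zero] at h5
    rw [hy, h5]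
    unfold nbit
    simp
    omega
  · have hy : a * 2 ^ (c + 1) + b * 2 ^ c + r = r + (2 * a + b) * 2 ^ c := by
      rw [e2]; ring
    rw [hy, Nat.add_mul_mod_self_right, Nat.mod_eq_of_lt hr]

lemma flipb_decomp (c x : ℕ) :
    flipb c x = x / 2 ^ (c + 1) * 2 ^ (c + 1) + (1 - nbit x c) * 2 ^ c + x % 2 ^ c := rfl

lemma flipb_div (c x : ℕ) : flipb c x / 2 ^ (c + 1) = x / 2 ^ (c + 1) :=
  (extract c _ _ _ (by omega) (Nat.mod_lt _ (Nat.pow_pos (n := c) (by norm_num)))).1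

lemma flipb_nbit_self (c x : ℕ) : nbit (flipb c x) c = 1 - nbit x c :=
  (extract c _ _ _ (by omega) (Nat.mod_lt _ (Nat.pow_pos (n := c) (by norm_num)))).2.1

lemma flipb_mod (c x : ℕ) : flipb c x % 2 ^ c = x % 2 ^ c :=
  (extract c _ _ _ (by omega) (Nat.mod_lt _ (Nat.pow_pos (n := c) (by norm_num)))).2.2

lemma flipb_flipb (c x : ℕ) : flipb c (flipb c x) = x := by
  have h := decomp c x
  rw [flipb_decomp, flipb_div, flipb_nbit_self, flipb_mod]
  have := nbit_le_one' x c
  have h2 : 1 - (1 - nbit x c) = nbit x c := by omega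
  rw [h2]
  omega

lemma flipb_ne (c x : ℕ) : flipb c x ≠ x := by
  intro h
  have h1 := flipb_nbit_self c x
  rw [h] at h1
  have := nbit_le_one' x c
  omega

lemma flipb_nbit_other (c x j : ℕ) (hj : j ≠ c) : nbit (flipb c x) j = nbit x j := by
  rcases Nat.lt_or_ge j c with h | h
  · -- low bits: both equal nbit (x % 2^c) j
    have hm : x % 2 ^ c < 2 ^ c := Nat.mod_lt _ (Nat.pow_pos (n := c) (by norm_num))
    have e1 : flipb c x = (x / 2 ^ (c+1) * 2 + (1 - nbit x c)) * 2 ^ c + x % 2 ^ c := by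
      rw [flipb_decomp, pow_succ]; ring
    have e2 : x = (x / 2 ^ (c+1) * 2 + nbit x c) * 2 ^ c + x % 2 ^ c := by
      nth_rewrite 1 [decomp c x]
      rw [pow_succ]; ring
    rw [e1, nbit_lo _ _ _ _ h]
    conv_rhs => rw [e2]
    rw [nbit_lo _ _ _ _ h]
  · -- high bits
    have hj' : ∃ k, j = (c + 1) + k := ⟨j - c - 1, by omega⟩
    obtain ⟨k, rfl⟩ := hj'
    have hm : (1 - nbit x c) * 2 ^ c + x % 2 ^ c < 2 ^ (c+1) := by
      have h1 : x % 2 ^ c < 2 ^ c := Nat.mod_lt _ (Nat.pow_pos (n := c) (by norm_num))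
      have e2 : 2 ^ (c+1) = 2 ^ c * 2 := pow_succ 2 c
      have h3 : (1 - nbit x c) * 2 ^ c ≤ 1 * 2 ^ c := Nat.mul_le_mul_right _ (by omega)
      omega
    have hm' : nbit x c * 2 ^ c + x % 2 ^ c < 2 ^ (c+1) := by
      have h1 : x % 2 ^ c < 2 ^ c := Nat.mod_lt _ (Nat.pow_pos (n := c) (by norm_num))
      have e2 : 2 ^ (c+1) = 2 ^ c * 2 := pow_succ 2 c
      have h3 : nbit x c * 2 ^ c ≤ 1 * 2 ^ c := Nat.mul_le_mul_right _ (nbit_le_one' x c)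
      omega
    have e1 : flipb c x = x / 2 ^ (c+1) * 2 ^ (c+1) + ((1 - nbit x c) * 2 ^ c + x % 2 ^ c) := by
      rw [flipb_decomp]; ring
    rw [e1, nbit_hi _ _ _ _ hm]
    nth_rewrite 2 [decomp c x]
    rw [Nat.add_assoc, nbit_hi _ _ _ _ hm']

lemma flipb_lt (c x n : ℕ) (hc : c < n) (hx : x < 2 ^ n) : flipb c x < 2 ^ n := by
  have hQ : x / 2 ^ (c + 1) < 2 ^ (n - c - 1) := by
    rw [Nat.div_lt_iff_lt_mul (Nat.pow_pos (n := (c+1)) (by norm_num)), ← pow_add]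
    have : n - c - 1 + (c + 1) = n := by omega
    rw [this]; exact hx
  have e1 : 2 ^ n = 2 ^ (n - c - 1) * 2 ^ (c + 1) := by rw [← pow_add]; congr 1; omega
  have h1 : x % 2 ^ c < 2 ^ c := Nat.mod_lt _ (Nat.pow_pos (n := c) (by norm_num))
  have e2 : 2 ^ (c+1) = 2 ^ c * 2 := pow_succ 2 c
  have hb : (1 - nbit x c) ≤ 1 := by omega
  rw [flipb_decomp, e1]
  have hq : x / 2 ^ (c + 1) + 1 ≤ 2 ^ (n - c - 1) := hQ
  calc x / 2 ^ (c + 1) * 2 ^ (c + 1) + (1 - nbit x c) * 2 ^ c + x % 2 ^ c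
      < x / 2 ^ (c + 1) * 2 ^ (c + 1) + 2 ^ (c+1) := by
        have h3 : (1 - nbit x c) * 2 ^ c ≤ 1 * 2 ^ c := Nat.mul_le_mul_right _ (by omega)
        omega
    _ = (x / 2 ^ (c + 1) + 1) * 2 ^ (c+1) := by ring
    _ ≤ 2 ^ (n - c - 1) * 2 ^ (c + 1) := Nat.mul_le_mul_right _ hq

lemma flipb_add (c x y t : ℕ) (hb : nbit x c = nbit y c) (hxy : x + t = y) :
    flipb c x + t = flipb c y := by
  have dx := decomp c x
  have dy := decomp c y
  have fx := flipb_decomp c x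
  have fy := flipb_decomp c y
  have h1 := nbit_le_one' x c
  rcases Nat.lt_or_ge (nbit x c) 1 with h | h
  · have hx0 : nbit x c = 0 := by omega
    have hy0 : nbit y c = 0 := by omega
    rw [hx0] at dx fx
    rw [hy0] at dy fy
    omega
  · have hx1 : nbit x c = 1 := by omega
    have hy1 : nbit y c = 1 := by omega
    rw [hx1] at dx fx
    rw [hy1] at dy fy
    omega



-- ZMod 2 helpers for the involution
lemma z_rearr : ∀ p q r : ZMod 2, p + q = r → p = q + r := by decide

lemma z_ne_eq (a b : ZMod 2) (h : a ≠ b) : a = 1 + b := by revert a b; decide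

lemma exists_diff (u w n : ℕ) (hu : u < 2 ^ n) (hw : w < 2 ^ n) (hne : u ≠ w) :
    ∃ j, j < n ∧ nbit u j ≠ nbit w j := by
  by_contra hcon
  push_neg at hcon
  apply hne
  apply Nat.eq_of_testBit_eq
  intro j
  rcases Nat.lt_or_ge j n with h | h
  · rw [Nat.testBit_eq_decide_div_mod_eq, Nat.testBit_eq_decide_div_mod_eq]
    have := hcon j h
    unfold nbit at this
    rw [this]
  · have h1 : u < 2 ^ j := lt_of_lt_of_le hu (Nat.pow_le_pow_right (by norm_num) h)
    have h2 : w < 2 ^ j := lt_of_lt_of_le hw (Nat.pow_le_pow_right (by norm_num) h)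
    rw [Nat.testBit_eq_decide_div_mod_eq, Nat.testBit_eq_decide_div_mod_eq, Nat.div_eq_of_lt h1, Nat.div_eq_of_lt h2]

/-- specification of the largest differing π-index -/
lemma nu_spec (m : ℕ) (hm : 4 ≤ m) (π : ℕ → ℕ)
    (hπ : Set.BijOn π (Set.Iio (m - 2)) (Set.Iio (m - 2)))
    (t u : ℕ) (ht : 1 ≤ t) (hu : u + t < 2 ^ (m - 2))
    (hV : nbit u (π (m - 3)) = nbit (u + t) (π (m - 3))) :
    Nat.findGreatest (fun γ => nbit u (π γ) ≠ nbit (u + t) (π γ)) (m - 3) < m - 3 ∧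
    nbit u (π (Nat.findGreatest (fun γ => nbit u (π γ) ≠ nbit (u + t) (π γ)) (m - 3))) ≠
      nbit (u + t) (π (Nat.findGreatest (fun γ => nbit u (π γ) ≠ nbit (u + t) (π γ)) (m - 3))) ∧
    ∀ γ, Nat.findGreatest (fun γ => nbit u (π γ) ≠ nbit (u + t) (π γ)) (m - 3) < γ → γ ≤ m - 3 →
      nbit u (π γ) = nbit (u + t) (π γ) := by
  set D := fun γ => nbit u (π γ) ≠ nbit (u + t) (π γ) with hD
  set ν := Nat.findGreatest D (m - 3) with hν
  -- existence of a differing index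
  have hw : u < 2 ^ (m - 2) := by omega
  obtain ⟨j, hj, hdiff⟩ := exists_diff u (u + t) (m - 2) hw hu (by omega)
  obtain ⟨γ₀, hγ₀mem, hγ₀⟩ := hπ.surjOn (Set.mem_Iio.2 hj)
  have hγ₀lt : γ₀ < m - 2 := Set.mem_Iio.1 hγ₀mem
  have hwit : D γ₀ := by rw [hD]; simp only; rw [hγ₀]; exact hdiff
  have hγ₀le : γ₀ ≤ m - 3 := by omega
  have hspec : D ν := Nat.findGreatest_spec hγ₀le hwit
  have hle : ν ≤ m - 3 := Nat.findGreatest_le _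
  have hne3 : ν ≠ m - 3 := by
    intro h
    have hD3 : D (m - 3) := h ▸ hspec
    exact hD3 hV
  refine ⟨by omega, hspec, ?_⟩
  intro γ hγ1 hγ2
  by_contra hcon
  exact Nat.findGreatest_is_greatest hγ1 hγ2 hcon

-- pointwise char-2 helpers
lemma zh1 : ∀ a b : ZMod 2, a * (1 + b) + a * b = a := by decide
lemma zh2 : ∀ a b : ZMod 2, (1 + a) * b + a * b = b := by decide
lemma zh3 : ∀ a : ZMod 2, a + a = 0 := by decide
lemma zh4 : ∀ a b : ZMod 2, (1 - a) * (1 - (1 + b)) + (1 - a) * (1 - b) = 1 - a := by decide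
lemma zh5 : ∀ a b : ZMod 2, (1 - (1 + a)) * (1 - b) + (1 - a) * (1 - b) = 1 - b := by decide
lemma zh6 : ∀ a b : ZMod 2, a * (1 - (1 + b)) + a * (1 - b) = a := by decide

lemma zeta_flip (m : ℕ) (hm : 4 ≤ m) (π : ℕ → ℕ)
    (hinj : Set.InjOn π (Set.Iio (m - 2))) (β : ℕ) (hβ : β < m - 3)
    (x x' : ℕ → ZMod 2)
    (hc : x' (π (β + 1)) = 1 + x (π (β + 1)))
    (heq : ∀ j, j ≠ π (β + 1) → x' j = x j) :
    zeta m π 0 x' + zeta m π 0 x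
      = x (π β) + (if β + 1 < m - 3 then x (π (β + 2)) else 0) := by
  have hinj' : ∀ γ₁ γ₂, γ₁ < m - 2 → γ₂ < m - 2 → π γ₁ = π γ₂ → γ₁ = γ₂ := by
    intro γ₁ γ₂ h1 h2 h
    exact hinj (Set.mem_Iio.2 h1) (Set.mem_Iio.2 h2) h
  unfold zeta
  simp only [zero_mul, add_zero]
  rw [← Finset.sum_add_distrib]
  have key : ∀ α ∈ Finset.range (m - 3),
      x' (π α) * x' (π (α + 1)) + x (π α) * x (π (α + 1))
        = (if α = β then x (π β) else 0) + (if α = β + 1 then x (π (β + 2)) else 0) := by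
    intro α hα
    rw [Finset.mem_range] at hα
    by_cases h1 : α = β
    · subst h1
      rw [if_pos rfl, if_neg (by omega), add_zero]
      have e1 : x' (π α) = x (π α) := heq _ (fun hh => by
        have := hinj' α (α + 1) (by omega) (by omega) hh
        omega)
      rw [e1, hc, zh1]
    · by_cases h2 : α = β + 1
      · subst h2
        rw [if_neg h1, if_pos rfl, zero_add]
        have e1 : x' (π (β + 1 + 1)) = x (π (β + 1 + 1)) := heq _ (fun hh => by
          have := hinj' (β + 1 + 1) (β + 1) (by omega) (by omega) hh
          omega)
        have e2 : β + 1 + 1 = β + 2 := by omega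
        rw [e1, hc, e2, zh2]
      · rw [if_neg h1, if_neg h2, add_zero]
        have e1 : x' (π α) = x (π α) := heq _ (fun hh => by
          have := hinj' α (β + 1) (by omega) (by omega) hh
          omega)
        have e2 : x' (π (α + 1)) = x (π (α + 1)) := heq _ (fun hh => by
          have := hinj' (α + 1) (β + 1) (by omega) (by omega) hh
          omega)
        rw [e1, e2, zh3]
  rw [Finset.sum_congr rfl key, Finset.sum_add_distrib,
    Finset.sum_ite_eq' (Finset.range (m - 3)) β (fun _ => x (π β)),
    Finset.sum_ite_eq' (Finset.range (m - 3)) (β + 1) (fun _ => x (π (β + 2)))]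
  rw [if_pos (Finset.mem_range.2 hβ)]
  congr 1
  simp [Finset.mem_range]

lemma eta_flip (m : ℕ) (hm : 4 ≤ m) (π : ℕ → ℕ)
    (hinj : Set.InjOn π (Set.Iio (m - 2))) (β : ℕ) (hβ : β < m - 3)
    (x x' : ℕ → ZMod 2)
    (hc : x' (π (β + 1)) = 1 + x (π (β + 1)))
    (heq : ∀ j, j ≠ π (β + 1) → x' j = x j) :
    eta m π 0 x' + eta m π 0 x
      = (1 - x (π β)) + (if β + 1 < m - 3 then 1 - x (π (β + 2)) else 0)
        + (if β + 1 = m - 3 then 1 else 0) := by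
  have hinj' : ∀ γ₁ γ₂, γ₁ < m - 2 → γ₂ < m - 2 → π γ₁ = π γ₂ → γ₁ = γ₂ := by
    intro γ₁ γ₂ h1 h2 h
    exact hinj (Set.mem_Iio.2 h1) (Set.mem_Iio.2 h2) h
  unfold eta
  have hlin : (1 - (0:ZMod 2)) * x' (π (m - 3)) + (1 - (0:ZMod 2)) * x (π (m - 3))
      = (if β + 1 = m - 3 then 1 else 0) := by
    by_cases h : β + 1 = m - 3
    · rw [if_pos h, ← h, hc]
      generalize x (π (β + 1)) = z
      revert z; decide
    · rw [if_neg h]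
      have e1 : x' (π (m - 3)) = x (π (m - 3)) := heq _ (fun hh => by
        have h2 := hinj' (m - 3) (β + 1) (by omega) (by omega) hh
        omega)
      rw [e1]
      exact zh3 _
  have key : ∀ α ∈ Finset.range (m - 3),
      (1 - x' (π α)) * (1 - x' (π (α + 1))) + (1 - x (π α)) * (1 - x (π (α + 1)))
        = (if α = β then 1 - x (π β) else 0) + (if α = β + 1 then 1 - x (π (β + 2)) else 0) := by
    intro α hα
    rw [Finset.mem_range] at hα
    by_cases h1 : α = β
    · subst h1
      rw [if_pos rfl, if_neg (by omega), add_zero]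
      have e1 : x' (π α) = x (π α) := heq _ (fun hh => by
        have := hinj' α (α + 1) (by omega) (by omega) hh
        omega)
      rw [e1, hc, zh4]
    · by_cases h2 : α = β + 1
      · subst h2
        rw [if_neg h1, if_pos rfl, zero_add]
        have e1 : x' (π (β + 1 + 1)) = x (π (β + 1 + 1)) := heq _ (fun hh => by
          have := hinj' (β + 1 + 1) (β + 1) (by omega) (by omega) hh
          omega)
        have e2 : β + 1 + 1 = β + 2 := by omega
        rw [e1, hc, e2, zh5]
      · rw [if_neg h1, if_neg h2, add_zero]
        have e1 : x' (π α) = x (π α) := heq _ (fun hh => by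
          have := hinj' α (β + 1) (by omega) (by omega) hh
          omega)
        have e2 : x' (π (α + 1)) = x (π (α + 1)) := heq _ (fun hh => by
          have := hinj' (α + 1) (β + 1) (by omega) (by omega) hh
          omega)
        rw [e1, e2, zh3]
  have hre : (∑ α ∈ Finset.range (m-3), (1 - x' (π α)) * (1 - x' (π (α + 1))))
        + (1 - (0:ZMod 2)) * x' (π (m - 3))
        + ((∑ α ∈ Finset.range (m-3), (1 - x (π α)) * (1 - x (π (α + 1))))
        + (1 - (0:ZMod 2)) * x (π (m - 3)))
      = (∑ α ∈ Finset.range (m-3), ((1 - x' (π α)) * (1 - x' (π (α + 1)))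
          + (1 - x (π α)) * (1 - x (π (α + 1)))))
        + ((1 - (0:ZMod 2)) * x' (π (m - 3)) + (1 - (0:ZMod 2)) * x (π (m - 3))) := by
    rw [Finset.sum_add_distrib]; ring
  rw [hre, hlin, Finset.sum_congr rfl key, Finset.sum_add_distrib,
    Finset.sum_ite_eq' (Finset.range (m - 3)) β (fun _ => 1 - x (π β)),
    Finset.sum_ite_eq' (Finset.range (m - 3)) (β + 1) (fun _ => 1 - x (π (β + 2)))]
  rw [if_pos (Finset.mem_range.2 hβ)]
  congr 2
  simp [Finset.mem_range]

lemma lin_flip (m : ℕ) (e f : ℕ → ZMod 2) (c : ℕ) (hc : c < m - 2)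
    (x x' : ℕ → ZMod 2) (hcv : x' c = 1 + x c)
    (heq : ∀ j, j ≠ c → x' j = x j) :
    lin m e f x' + lin m e f x = e c + f c := by
  unfold lin
  have key1 : ∀ i ∈ Finset.range (m - 2),
      e i * x' i + e i * x i = (if i = c then e c else 0) := by
    intro i hi
    by_cases h : i = c
    · subst h; rw [if_pos rfl, hcv, zh1]
    · rw [if_neg h, heq i h, zh3]
  have key2 : ∀ i ∈ Finset.range (m - 2),
      f i * (1 - x' i) + f i * (1 - x i) = (if i = c then f c else 0) := by
    intro i hi
    by_cases h : i = c
    · subst h; rw [if_pos rfl, hcv, zh6]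
    · rw [if_neg h, heq i h, zh3]
  have hre : (∑ i ∈ Finset.range (m-2), e i * x' i) + (∑ i ∈ Finset.range (m-2), f i * (1 - x' i))
        + ((∑ i ∈ Finset.range (m-2), e i * x i) + (∑ i ∈ Finset.range (m-2), f i * (1 - x i)))
      = (∑ i ∈ Finset.range (m-2), (e i * x' i + e i * x i))
        + (∑ i ∈ Finset.range (m-2), (f i * (1 - x' i) + f i * (1 - x i))) := by
    rw [Finset.sum_add_distrib, Finset.sum_add_distrib]; ring
  rw [hre, Finset.sum_congr rfl key1, Finset.sum_congr rfl key2,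
    Finset.sum_ite_eq' (Finset.range (m - 2)) c (fun _ => e c),
    Finset.sum_ite_eq' (Finset.range (m - 2)) c (fun _ => f c),
    if_pos (Finset.mem_range.2 hc), if_pos (Finset.mem_range.2 hc)]

lemma bitZ_flip_val (x y j : ℕ) (h : nbit y j = 1 - nbit x j) : bitZ y j = 1 + bitZ x j := by
  have h1 := nbit_le_one' x j
  rw [bitZ_nbit, bitZ_nbit, h]
  interval_cases hx : nbit x j <;> simp_all <;> decide

lemma flip_all (m : ℕ) (hm : 4 ≤ m) (π : ℕ → ℕ)
    (hπ : Set.BijOn π (Set.Iio (m - 2)) (Set.Iio (m - 2))) (e f : ℕ → ZMod 2)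
    (t u : ℕ) (ht : 1 ≤ t) (hu : u + t < 2 ^ (m - 2))
    (hV : nbit u (π (m - 3)) = nbit (u + t) (π (m - 3))) :
    flipb (π (Nat.findGreatest (fun γ => nbit u (π γ) ≠ nbit (u + t) (π γ)) (m - 3) + 1)) u + t
      = flipb (π (Nat.findGreatest (fun γ => nbit u (π γ) ≠ nbit (u + t) (π γ)) (m - 3) + 1))
          (u + t) ∧
    flipb (π (Nat.findGreatest (fun γ => nbit u (π γ) ≠ nbit (u + t) (π γ)) (m - 3) + 1)) u + t
      < 2 ^ (m - 2) ∧
    (letI u' := flipb (π (Nat.findGreatest (fun γ => nbit u (π γ) ≠ nbit (u + t) (π γ))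
        (m - 3) + 1)) u
     nbit u' (π (m - 3)) = nbit (u' + t) (π (m - 3)) ∧
     Nat.findGreatest (fun γ => nbit u' (π γ) ≠ nbit (u' + t) (π γ)) (m - 3)
       = Nat.findGreatest (fun γ => nbit u (π γ) ≠ nbit (u + t) (π γ)) (m - 3) ∧
     Aq m π e f 0 u' * Bq m π e f 0 (u' + t) = -(Aq m π e f 0 u * Bq m π e f 0 (u + t))) := by
  obtain ⟨hβlt, hβne, hβmax⟩ := nu_spec m hm π hπ t u ht hu hV
  set β := Nat.findGreatest (fun γ => nbit u (π γ) ≠ nbit (u + t) (π γ)) (m - 3) with hβdef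
  set c := π (β + 1) with hcdef
  set w := u + t with hwdef
  have hmaps : ∀ γ, γ < m - 2 → π γ < m - 2 := fun γ h => Set.mem_Iio.1 (hπ.mapsTo (Set.mem_Iio.2 h))
  have hinj' : ∀ γ₁ γ₂, γ₁ < m - 2 → γ₂ < m - 2 → π γ₁ = π γ₂ → γ₁ = γ₂ := by
    intro γ₁ γ₂ h1 h2 h
    exact hπ.injOn (Set.mem_Iio.2 h1) (Set.mem_Iio.2 h2) h
  have hc2 : c < m - 2 := hmaps _ (by omega)
  have hbitc : nbit u c = nbit w c := hβmax (β + 1) (by omega) (by omega)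
  have h1 : flipb c u + t = flipb c w := flipb_add c u w t hbitc rfl
  have h2 : flipb c u + t < 2 ^ (m - 2) := by
    rw [h1]
    exact flipb_lt c w (m - 2) hc2 hu
  set u' := flipb c u with hu'def
  set w' := flipb c w with hw'def
  -- V is preserved
  have h3 : nbit u' (π (m - 3)) = nbit (u' + t) (π (m - 3)) := by
    rw [h1]
    by_cases hpc : π (m - 3) = c
    · rw [hpc] at hV
      rw [hpc, flipb_nbit_self, flipb_nbit_self, hV]
    · rw [flipb_nbit_other _ _ _ hpc, flipb_nbit_other _ _ _ hpc]
      exact hV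
  -- the differing-set is preserved
  have hDiff : ∀ γ, (nbit u' (π γ) ≠ nbit (u' + t) (π γ)) ↔ (nbit u (π γ) ≠ nbit w (π γ)) := by
    intro γ
    rw [h1]
    by_cases hpc : π γ = c
    · rw [hpc, flipb_nbit_self, flipb_nbit_self]
      have b1 := nbit_le_one' u c
      have b2 := nbit_le_one' w c
      omega
    · rw [flipb_nbit_other _ _ _ hpc, flipb_nbit_other _ _ _ hpc]
  have h4 : Nat.findGreatest (fun γ => nbit u' (π γ) ≠ nbit (u' + t) (π γ)) (m - 3) = β := by
    apply le_antisymm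
    · by_contra hcon
      push_neg at hcon
      have hD'β : nbit u' (π β) ≠ nbit (u' + t) (π β) := (hDiff β).2 hβne
      have hspec := Nat.findGreatest_spec
        (P := fun γ => nbit u' (π γ) ≠ nbit (u' + t) (π γ)) (le_of_lt hβlt) hD'β
      have hle := Nat.findGreatest_le (P := fun γ => nbit u' (π γ) ≠ nbit (u' + t) (π γ)) (m - 3)
      exact ((hDiff _).1 hspec) (hβmax _ hcon hle)
    · exact Nat.le_findGreatest (le_of_lt hβlt) ((hDiff β).2 hβne)
  refine ⟨h1, h2, h3, h4, ?_⟩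
  -- the sign flip
  have hc' : bitZ u' c = 1 + bitZ u c := bitZ_flip_val u u' c (flipb_nbit_self c u)
  have heq' : ∀ j, j ≠ c → bitZ u' j = bitZ u j := by
    intro j hj
    rw [bitZ_nbit, bitZ_nbit, flipb_nbit_other _ _ _ hj]
  have hcw : bitZ w' c = 1 + bitZ w c := bitZ_flip_val w w' c (flipb_nbit_self c w)
  have heqw : ∀ j, j ≠ c → bitZ w' j = bitZ w j := by
    intro j hj
    rw [bitZ_nbit, bitZ_nbit, flipb_nbit_other _ _ _ hj]
  have hz := zeta_flip m hm π hπ.injOn β hβlt (bitZ u) (bitZ u') hc' heq'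
  have he := eta_flip m hm π hπ.injOn β hβlt (bitZ w) (bitZ w') hcw heqw
  have hlu := lin_flip m e f c hc2 (bitZ u) (bitZ u') hc' heq'
  have hlw := lin_flip m e f c hc2 (bitZ w) (bitZ w') hcw heqw
  have hneβ : bitZ u (π β) ≠ bitZ w (π β) := by
    simp only [ne_eq, bitZ_eq_iff]; exact hβne
  -- combine
  unfold Aq Bq
  rw [h1, ← sgn_add, ← sgn_add]
  have hkey : (zeta m π 0 (bitZ u') + lin m e f (bitZ u'))
        + (eta m π 0 (bitZ w') + lin m e f (bitZ w'))
      = 1 + ((zeta m π 0 (bitZ u) + lin m e f (bitZ u))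
        + (eta m π 0 (bitZ w) + lin m e f (bitZ w))) := by
    have hcomb : ((zeta m π 0 (bitZ u') + lin m e f (bitZ u'))
          + (eta m π 0 (bitZ w') + lin m e f (bitZ w')))
        + ((zeta m π 0 (bitZ u) + lin m e f (bitZ u))
          + (eta m π 0 (bitZ w) + lin m e f (bitZ w)))
        = ((zeta m π 0 (bitZ u') + zeta m π 0 (bitZ u))
          + (eta m π 0 (bitZ w') + eta m π 0 (bitZ w)))
          + ((lin m e f (bitZ u') + lin m e f (bitZ u))
          + (lin m e f (bitZ w') + lin m e f (bitZ w))) := by ring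
    have hRz : (zeta m π 0 (bitZ u') + zeta m π 0 (bitZ u))
          + (eta m π 0 (bitZ w') + eta m π 0 (bitZ w)) = 1 := by
      rw [hz, he]
      by_cases hcase : β + 1 < m - 3
      · rw [if_pos hcase, if_pos hcase, if_neg (by omega)]
        have h2' : bitZ u (π (β + 2)) = bitZ w (π (β + 2)) := by
          rw [bitZ_eq_iff]
          exact hβmax (β + 2) (by omega) (by omega)
        rw [h2']
        have hsum := zsum_ne _ _ hneβ
        generalize bitZ u (π β) = za at hsum hneβ
        generalize bitZ w (π β) = zb at hsum hneβ
        generalize bitZ w (π (β + 2)) = zc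
        revert hsum; revert za zb zc; decide
      · rw [if_neg hcase, if_neg hcase, if_pos (by omega)]
        have hsum := zsum_ne _ _ hneβ
        generalize bitZ u (π β) = za at hsum hneβ
        generalize bitZ w (π β) = zb at hsum hneβ
        revert hsum; revert za zb; decide
    have hfinal : ((zeta m π 0 (bitZ u') + lin m e f (bitZ u'))
          + (eta m π 0 (bitZ w') + lin m e f (bitZ w')))
        + ((zeta m π 0 (bitZ u) + lin m e f (bitZ u))
          + (eta m π 0 (bitZ w) + lin m e f (bitZ w))) = 1 := by
      rw [hcomb, hRz, hlu, hlw, zh3]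
      exact add_zero 1
    have := z_rearr _ _ _ hfinal
    rw [this]
    ring
  rw [hkey, sgn_one_add]

lemma Aq_one (m : ℕ) (π : ℕ → ℕ) (e f : ℕ → ZMod 2) (u : ℕ) :
    Aq m π e f 1 u = Aq m π e f 0 u * (-1) ^ ((bitZ u (π (m - 3))).val) := by
  unfold Aq
  have h : zeta m π 1 (bitZ u) + lin m e f (bitZ u)
      = (zeta m π 0 (bitZ u) + lin m e f (bitZ u)) + bitZ u (π (m - 3)) := by
    unfold zeta; ring
  rw [h, sgn_add]

lemma Bq_one (m : ℕ) (π : ℕ → ℕ) (e f : ℕ → ZMod 2) (u : ℕ) :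
    Bq m π e f 1 u = Bq m π e f 0 u * (-1) ^ ((bitZ u (π (m - 3))).val) := by
  unfold Bq
  have h : eta m π 1 (bitZ u) + lin m e f (bitZ u)
      = (eta m π 0 (bitZ u) + lin m e f (bitZ u)) + bitZ u (π (m - 3)) := by
    unfold eta
    generalize bitZ u (π (m - 3)) = z
    generalize (∑ α ∈ Finset.range (m - 3), (1 - bitZ u (π α)) * (1 - bitZ u (π (α + 1)))) = S
    generalize lin m e f (bitZ u) = L
    revert S L z; decide
  rw [h, sgn_add]

lemma term_V (m : ℕ) (π : ℕ → ℕ) (e f : ℕ → ZMod 2) (u v : ℕ)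
    (hV : nbit u (π (m - 3)) = nbit v (π (m - 3))) :
    Aq m π e f 0 u * Bq m π e f 0 v + Aq m π e f 1 u * Bq m π e f 1 v
      = 2 * (Aq m π e f 0 u * Bq m π e f 0 v) := by
  rw [Aq_one, Bq_one]
  have hs := sgn_eq (bitZ u (π (m - 3))) (bitZ v (π (m - 3))) ((bitZ_eq_iff _ _ _ _).2 hV)
  linear_combination (Aq m π e f 0 u * Bq m π e f 0 v) * hs

lemma term_offV (m : ℕ) (π : ℕ → ℕ) (e f : ℕ → ZMod 2) (u v : ℕ)
    (hV : nbit u (π (m - 3)) ≠ nbit v (π (m - 3))) :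
    Aq m π e f 0 u * Bq m π e f 0 v + Aq m π e f 1 u * Bq m π e f 1 v = 0 := by
  rw [Aq_one, Bq_one]
  have hs := sgn_ne (bitZ u (π (m - 3))) (bitZ v (π (m - 3)))
    (by simp only [ne_eq, bitZ_eq_iff]; exact hV)
  linear_combination (Aq m π e f 0 u * Bq m π e f 0 v) * hs

lemma main_cancel (m : ℕ) (hm : 4 ≤ m) (π : ℕ → ℕ)
    (hπ : Set.BijOn π (Set.Iio (m - 2)) (Set.Iio (m - 2))) (e f : ℕ → ZMod 2)
    (t : ℕ) (ht : 1 ≤ t) (ht2 : t ≤ 2 ^ (m - 2)) :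
    ∑ u ∈ Finset.range (2 ^ (m - 2) - t),
      (Aq m π e f 0 u * Bq m π e f 0 (u + t) + Aq m π e f 1 u * Bq m π e f 1 (u + t)) = 0 := by
  refine Finset.sum_involution
    (fun u _ => if nbit u (π (m - 3)) = nbit (u + t) (π (m - 3)) then
      flipb (π (Nat.findGreatest (fun γ => nbit u (π γ) ≠ nbit (u + t) (π γ)) (m - 3) + 1)) u
      else u) ?_ ?_ ?_ ?_
  · -- sum of pair is zero
    intro u hu
    by_cases hV : nbit u (π (m - 3)) = nbit (u + t) (π (m - 3))
    · simp only [if_pos hV]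
      have humem : u + t < 2 ^ (m - 2) := by
        have := Finset.mem_range.1 hu; omega
      obtain ⟨e1, e2, e3, e4, e5⟩ := flip_all m hm π hπ e f t u ht humem hV
      rw [term_V m π e f u (u + t) hV, term_V m π e f _ _ e3, e5]
      ring
    · simp only [if_neg hV]
      rw [term_offV m π e f u (u + t) hV]
      norm_num
  · -- nontrivial on support
    intro u hu hne
    by_cases hV : nbit u (π (m - 3)) = nbit (u + t) (π (m - 3))
    · simp only [if_pos hV]
      exact flipb_ne _ _
    · exact absurd (term_offV m π e f u (u + t) hV) hne
  · -- membership
    intro u hu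
    by_cases hV : nbit u (π (m - 3)) = nbit (u + t) (π (m - 3))
    · simp only [if_pos hV]
      have humem : u + t < 2 ^ (m - 2) := by
        have := Finset.mem_range.1 hu; omega
      obtain ⟨e1, e2, e3, e4, e5⟩ := flip_all m hm π hπ e f t u ht humem hV
      rw [Finset.mem_range]
      omega
    · simp only [if_neg hV]
      exact hu
  · -- involution
    intro u hu
    by_cases hV : nbit u (π (m - 3)) = nbit (u + t) (π (m - 3))
    · simp only [if_pos hV]
      have humem : u + t < 2 ^ (m - 2) := by
        have := Finset.mem_range.1 hu; omega
      obtain ⟨e1, e2, e3, e4, e5⟩ := flip_all m hm π hπ e f t u ht humem hV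
      rw [if_pos e3, e4, flipb_flipb]
    · simp only [if_neg hV]

lemma nbit_compl : ∀ j n s : ℕ, j < n → s < 2 ^ n → nbit (2 ^ n - 1 - s) j = 1 - nbit s j := by
  intro j
  induction j with
  | zero =>
    intro n s hn hs
    unfold nbit
    simp only [pow_zero, Nat.div_one]
    have h2 : 2 ^ n = 2 * 2 ^ (n - 1) := by
      rw [← pow_succ']
      congr 1
      omega
    omega
  | succ j ih =>
    intro n s hn hs
    have h2 : 2 ^ n = 2 * 2 ^ (n - 1) := by
      rw [← pow_succ']; congr 1; omega
    have hdiv : (2 ^ n - 1 - s) / 2 = 2 ^ (n - 1) - 1 - s / 2 := by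
      have := Nat.div_add_mod s 2
      have h1 : s % 2 < 2 := Nat.mod_lt _ (by norm_num)
      omega
    have hs' : s / 2 < 2 ^ (n - 1) := by omega
    have key := ih (n - 1) (s / 2) (by omega) hs'
    unfold nbit at key ⊢
    rw [pow_succ', ← Nat.div_div_eq_div_mul, ← Nat.div_div_eq_div_mul, hdiv]
    rw [key]

lemma pm_one (n : ℕ) : (-1:ℤ) ^ n = 1 ∨ (-1:ℤ) ^ n = -1 := neg_one_pow_eq_or ℤ n

lemma final_form (E X F Y σ : ℤ) (hE : E = 1 ∨ E = -1) (hX : X = 1 ∨ X = -1)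
    (hF : F = 1 ∨ F = -1) (hY : Y = 1 ∨ Y = -1) (hσ : σ = 1 ∨ σ = -1) :
    (E * X - F * Y) * (1 - σ) ∈ ({0, 4, -4} : Set ℤ) := by
  simp only [Set.mem_insert_iff, Set.mem_singleton_iff]
  rcases hE with rfl | rfl <;> rcases hX with rfl | rfl <;> rcases hF with rfl | rfl <;>
    rcases hY with rfl | rfl <;> rcases hσ with rfl | rfl <;> norm_num


/-- Outside the ZCZ, i.e. for `2^{m-2} + 2^{π(m-3)} < τ ≤ N-1`,
the aperiodic autocorrelation sum of the constructed pair lies in `{0, 4, -4}`;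
in particular its magnitude is exactly `4` whenever it is nonzero. -/
theorem ebzcp_out_of_zone (m : ℕ) (hm : 4 ≤ m) (π : ℕ → ℕ)
    (hπ : Set.BijOn π (Set.Iio (m - 2)) (Set.Iio (m - 2)))
    (e f : ℕ → ZMod 2)
    (N : ℕ) (hN : N = 2 ^ (m - 1) + 2)
    (a b : ℕ → ℤ)
    (ha : a = PsiT (gbf m π e f 0) (2 ^ (m - 2) - 1))
    (hb : b = PsiT (gbf m π e f 1) (2 ^ (m - 2) - 1)) :
    ∀ τ : ℕ, 2 ^ (m - 2) + 2 ^ (π (m - 3)) < τ → τ ≤ N - 1 →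
      rho N a τ + rho N b τ ∈ ({0, 4, -4} : Set ℤ) ∧
        (rho N a τ + rho N b τ ≠ 0 → |rho N a τ + rho N b τ| = 4) := by
  intro τ hτ1 hτ2
  subst hN ha hb
  have hmaps : ∀ γ, γ < m - 2 → π γ < m - 2 :=
    fun γ h => Set.mem_Iio.1 (hπ.mapsTo (Set.mem_Iio.2 h))
  set M := 2 ^ (m - 2) with hM
  have hM2 : 2 ^ (m - 1) = 2 * M := by
    rw [hM, ← pow_succ']
    congr 1
    omega
  have hM4 : 4 ≤ M := by
    rw [hM]
    calc 4 = 2 ^ 2 := by norm_num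
    _ ≤ 2 ^ (m - 2) := Nat.pow_le_pow_right (by norm_num) (by omega)
  have hppos : (1:ℕ) ≤ 2 ^ (π (m - 3)) := Nat.one_le_two_pow
  have hτM : M + 2 ≤ τ := by omega
  set t := τ - M with htdef
  have hτeq : τ = M + t := by omega
  have ht1 : 2 ≤ t := by omega
  have htub : t ≤ M + 1 := by
    rw [hM2] at hτ2
    omega
  have hNτ : 2 ^ (m - 1) + 2 - τ = M + 2 - t := by omega
  -- express the correlation sum as one sum
  rw [rho, rho, ← Finset.sum_add_distrib]
  simp only [PsiT, hNτ]
  -- key sub-lemma for the main body of the sum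
  by_cases hcase : t = M + 1
  · -- single term
    have h1 : M + 2 - t = 1 := by omega
    rw [h1, Finset.sum_range_one]
    have hp0 : M - 1 + 0 = M - 1 := by omega
    have hp3 : M - 1 + (0 + τ) = 3 * M := by omega
    rw [hp0, hp3]
    rw [psi_Q0 m π e f hm 0, psi_Q0 m π e f hm 1, psi_Q3 m π e f hm 0, psi_Q3 m π e f hm 1]
    have hv0 : ((0 : ZMod 2)).val = 0 := rfl
    have hv1 : ((1 : ZMod 2)).val = 1 := rfl
    rw [hv0, hv1]
    have key : ∀ S : ℤ, S = 0 → S ∈ ({0, 4, -4} : Set ℤ) ∧ (S ≠ 0 → |S| = 4) := by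
      intro S hS
      subst hS
      exact ⟨by simp, fun h => absurd rfl h⟩
    exact key _ (by ring)
  · -- t ≤ M
    have htM : t ≤ M := by omega
    have hsplit : M + 2 - t = (M - t + 1) + 1 := by omega
    rw [hsplit, Finset.sum_range_succ, Finset.sum_range_succ']
    -- middle sum vanishes
    have hmid : ∑ k ∈ Finset.range (M - t),
        (Psi (gbf m π e f 0) (M - 1 + (k + 1)) * Psi (gbf m π e f 0) (M - 1 + (k + 1 + τ))
          + Psi (gbf m π e f 1) (M - 1 + (k + 1)) * Psi (gbf m π e f 1) (M - 1 + (k + 1 + τ)))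
        = 0 := by
      have hcongr : ∀ k ∈ Finset.range (M - t),
          (Psi (gbf m π e f 0) (M - 1 + (k + 1)) * Psi (gbf m π e f 0) (M - 1 + (k + 1 + τ))
            + Psi (gbf m π e f 1) (M - 1 + (k + 1)) * Psi (gbf m π e f 1) (M - 1 + (k + 1 + τ)))
          = (Aq m π e f 0 k * Bq m π e f 0 (k + t) + Aq m π e f 1 k * Bq m π e f 1 (k + t)) := by
        intro k hk
        rw [Finset.mem_range] at hk
        have e1 : M - 1 + (k + 1) = M + k := by omega
        have e2 : M - 1 + (k + 1 + τ) = 2 * M + (k + t) := by omega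
        rw [e1, e2,
          psi_Q1 m π e f hm hmaps 0 k (by omega), psi_Q1 m π e f hm hmaps 1 k (by omega),
          psi_Q2 m π e f hm hmaps 0 (k + t) (by omega),
          psi_Q2 m π e f hm hmaps 1 (k + t) (by omega)]
      rw [Finset.sum_congr rfl hcongr]
      exact main_cancel m hm π hπ e f t (by omega) htM
    rw [hmid]
    -- boundary terms
    have hb0a : M - 1 + 0 = M - 1 := by omega
    have hb0b : M - 1 + (0 + τ) = 2 * M + (t - 1) := by omega
    have hbl1 : M - 1 + (M - t + 1) = M + (M - t) := by omega
    have hbl2 : M - 1 + (M - t + 1 + τ) = 3 * M := by omega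
    rw [hb0a, hb0b, hbl1, hbl2]
    rw [psi_Q0 m π e f hm 0, psi_Q0 m π e f hm 1,
      psi_Q2 m π e f hm hmaps 0 (t - 1) (by omega), psi_Q2 m π e f hm hmaps 1 (t - 1) (by omega),
      psi_Q1 m π e f hm hmaps 0 (M - t) (by omega), psi_Q1 m π e f hm hmaps 1 (M - t) (by omega),
      psi_Q3 m π e f hm 0, psi_Q3 m π e f hm 1]
    rw [Bq_one, Aq_one]
    -- complement of bits
    have hcompl : bitZ (M - t) (π (m - 3)) = 1 + bitZ (t - 1) (π (m - 3)) := by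
      apply bitZ_flip_val
      have hMt : M - t = 2 ^ (m - 2) - 1 - (t - 1) := by omega
      rw [hMt]
      exact nbit_compl (π (m - 3)) (m - 2) (t - 1) (hmaps _ (by omega)) (by omega)
    rw [hcompl, sgn_one_add]
    have hv0 : ((0 : ZMod 2)).val = 0 := rfl
    have hv1 : ((1 : ZMod 2)).val = 1 := rfl
    rw [hv0, hv1]
    set E : ℤ := (-1) ^ ((lin m e f (bitZ (M - 1))).val) with hE
    set F : ℤ := (-1) ^ ((lin m e f (bitZ (3 * M))).val) with hF
    set X : ℤ := Bq m π e f 0 (t - 1) with hX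
    set Y : ℤ := Aq m π e f 0 (M - t) with hY
    set σ : ℤ := (-1) ^ ((bitZ (t - 1) (π (m - 3))).val) with hσ
    have hEpm : E = 1 ∨ E = -1 := pm_one _
    have hFpm : F = 1 ∨ F = -1 := pm_one _
    have hXpm : X = 1 ∨ X = -1 := by rw [hX]; unfold Bq; exact pm_one _
    have hYpm : Y = 1 ∨ Y = -1 := by rw [hY]; unfold Aq; exact pm_one _
    have hσpm : σ = 1 ∨ σ = -1 := pm_one _
    have key : ∀ S : ℤ, S = (E * X - F * Y) * (1 - σ) →
        S ∈ ({0, 4, -4} : Set ℤ) ∧ (S ≠ 0 → |S| = 4) := by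
      intro S hS
      subst hS
      have hmem := final_form E X F Y σ hEpm hXpm hFpm hYpm hσpm
      refine ⟨hmem, ?_⟩
      intro hne
      simp only [Set.mem_insert_iff, Set.mem_singleton_iff] at hmem
      rcases hmem with h | h | h
      · exact absurd h hne
      · rw [h]; norm_num
      · rw [h]; norm_num
    exact key _ (by ring)
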